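/- Let F be defined from a positive-valued sequence c : ℕ → ℕ by F(n) = ∏_{j ∣ n} c(j) (product over positive divisors j of n). If c satisfies: for all k < n with gcd(n, k) ≠ k, gcd(c(n), c(k)) = 1, then F is GCD-morphic, i.e. gcd(F(n), F(m)) = F(gcd(n, m)) for all n, m ≥ 1. -/

import Mathlib

theorem C1_implies_gcd_morphic (c : ℕ → ℕ) (hpos : ∀ j, 1 ≤ j → 1 ≤ c j)
    (hC1 : ∀ k n, 1 ≤ k → k < n → Nat.gcd n k ≠ k → Nat.gcd (c n) (c k) = 1)
    (F : ℕ → ℕ) (hFdef : ∀ n, F n = ∏ j ∈ n.divisors, c j) :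
    ∀ n m, 1 ≤ n → 1 ≤ m → Nat.gcd (F n) (F m) = F (Nat.gcd n m) := by
  intro n m hn hm
  have hn0 : n ≠ 0 := by omega
  have hm0 : m ≠ 0 := by omega
  set d := Nat.gcd n m with hdd
  have hd0 : d ≠ 0 := Nat.gcd_ne_zero_left hn0
  have hsubn : d.divisors ⊆ n.divisors :=
    Nat.divisors_subset_of_dvd hn0 (Nat.gcd_dvd_left n m)
  have hsubm : d.divisors ⊆ m.divisors :=
    Nat.divisors_subset_of_dvd hm0 (Nat.gcd_dvd_right n m)
  have hA : F n = (∏ j ∈ n.divisors \ d.divisors, c j) * F d := by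
    rw [hFdef, hFdef, Finset.prod_sdiff hsubn]
  have hB : F m = (∏ j ∈ m.divisors \ d.divisors, c j) * F d := by
    rw [hFdef, hFdef, Finset.prod_sdiff hsubm]
  have hcop : Nat.Coprime (∏ j ∈ n.divisors \ d.divisors, c j)
      (∏ j ∈ m.divisors \ d.divisors, c j) := by
    apply Nat.Coprime.prod_left
    intro j hj
    apply Nat.Coprime.prod_right
    intro k hk
    simp only [Finset.mem_sdiff, Nat.mem_divisors] at hj hk
    have hjn : j ∣ n := hj.1.1
    have hkm : k ∣ m := hk.1.1
    have hjd : ¬ j ∣ d := fun h => hj.2 ⟨h, hd0⟩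
    have hkd : ¬ k ∣ d := fun h => hk.2 ⟨h, hd0⟩
    have hjk : ¬ j ∣ k := fun h => hjd (Nat.dvd_gcd hjn (h.trans hkm))
    have hkj : ¬ k ∣ j := fun h => hkd (Nat.dvd_gcd (h.trans hjn) hkm)
    have hj1 : 1 ≤ j := Nat.pos_of_dvd_of_pos hjn (Nat.pos_of_ne_zero hn0)
    have hk1 : 1 ≤ k := Nat.pos_of_dvd_of_pos hkm (Nat.pos_of_ne_zero hm0)
    rcases lt_trichotomy j k with h | h | h
    · exact Nat.Coprime.symm
        (hC1 j k hj1 h (fun hg => hjk (hg ▸ Nat.gcd_dvd_left k j)))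
    · exact absurd (h ▸ dvd_refl j) hjk
    · exact hC1 k j hk1 h (fun hg => hkj (hg ▸ Nat.gcd_dvd_left j k))
  rw [hA, hB, Nat.gcd_mul_right, hcop, one_mul]
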